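/- (Curvature upper bound on oriented hypergraphs) Let H_o be a weighted oriented hypergraph (so d is symmetric). For any α ∈ [0,1] and hyperedge h = (A_h, B_h), κ_α(h) ≤ (1-α) · 2 max_{h'∈H} w_{h'} / L(h). -/

import Mathlib

open Finset Filter Topology

variable {V : Type*} [Fintype V] [DecidableEq V]

/-- A finite weighted directed hypergraph: each hyperedge is an ordered pair
`(A_h, B_h)` of nonempty vertex sets, with a positive weight. -/
structure DHyp (V : Type*) [Fintype V] [DecidableEq V] where
  E : Finset (Finset V × Finset V)
  w : Finset V × Finset V → ℝ
  pos : ∀ h ∈ E, 0 < w h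
  nonempA : ∀ h ∈ E, h.1.Nonempty
  nonempB : ∀ h ∈ E, h.2.Nonempty

/-- `γ` is a directed path from `u` to `v`. -/
def IsDipath (G : DHyp V) (γ : List (Finset V × Finset V)) (u v : V) : Prop :=
  γ ≠ [] ∧ (∀ h ∈ γ, h ∈ G.E) ∧
  (∀ h0, γ.head? = some h0 → u ∈ h0.1) ∧
  (∀ hl, γ.getLast? = some hl → v ∈ hl.2) ∧
  List.Chain' (fun a b => (a.2 ∩ b.1).Nonempty) γ

/-- Weighted quasi-distance. -/
noncomputable def ddist (G : DHyp V) (u v : V) : ℝ :=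
  if u = v then 0 else sInf {s | ∃ γ, IsDipath G γ u v ∧ s = (γ.map G.w).sum}

/-- Strong connectivity: every ordered pair of distinct vertices is joined
by a directed path. -/
def StronglyConnected (G : DHyp V) : Prop :=
  ∀ u v : V, u ≠ v → ∃ γ, IsDipath G γ u v

/-- Looplessness: inputs and outputs of each hyperedge are disjoint. -/
def Loopless (G : DHyp V) : Prop := ∀ h ∈ G.E, h.1 ∩ h.2 = ∅

open Classical in
/-- In-neighborhood `Γ^{in}(x)`. -/
noncomputable def GammaIn (G : DHyp V) (x : V) : Finset V :=
  Finset.univ.filter (fun z => ∃ h ∈ G.E, x ∈ h.2 ∧ z ∈ h.1)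

open Classical in
/-- Out-neighborhood `Γ^{out}(x)`. -/
noncomputable def GammaOut (G : DHyp V) (x : V) : Finset V :=
  Finset.univ.filter (fun z => ∃ h ∈ G.E, x ∈ h.1 ∧ z ∈ h.2)

/-- In-degree: number of hyperedges having `x` as an output. -/
def degIn (G : DHyp V) (x : V) : ℕ := (G.E.filter (fun h => x ∈ h.2)).card

/-- Out-degree: number of hyperedges having `x` as an input. -/
def degOut (G : DHyp V) (x : V) : ℕ := (G.E.filter (fun h => x ∈ h.1)).card

/-- In-measure `μ^α_{x}` of a vertex `x ∈ A_h`, where `n = |A_h|`. -/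
noncomputable def muIn (G : DHyp V) (α : ℝ) (n : ℕ) (x z : V) : ℝ :=
  if z = x then α / n
  else if z ∈ GammaIn G x then
    (1 - α) * ∑ h ∈ G.E.filter (fun h => x ∈ h.2 ∧ z ∈ h.1),
      (1 / ((n : ℝ) * h.1.card)) *
        (G.w h / ∑ h' ∈ G.E.filter (fun h'' => x ∈ h''.2), G.w h')
  else 0

/-- Out-measure `μ^α_{y}` of a vertex `y ∈ B_h`, where `m = |B_h|`. -/
noncomputable def muOut (G : DHyp V) (α : ℝ) (m : ℕ) (y z : V) : ℝ :=
  if z = y then α / m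
  else if z ∈ GammaOut G y then
    (1 - α) * ∑ h ∈ G.E.filter (fun h => y ∈ h.1 ∧ z ∈ h.2),
      (1 / ((m : ℝ) * h.2.card)) *
        (G.w h / ∑ h' ∈ G.E.filter (fun h'' => y ∈ h''.1), G.w h')
  else 0

/-- The measure `μ^α_{A_h}`. -/
noncomputable def muA (G : DHyp V) (α : ℝ) (h : Finset V × Finset V) : V → ℝ :=
  fun z => ∑ x ∈ h.1, muIn G α h.1.card x z

/-- The measure `μ^α_{B_h}`. -/
noncomputable def muB (G : DHyp V) (α : ℝ) (h : Finset V × Finset V) : V → ℝ :=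
  fun z => ∑ y ∈ h.2, muOut G α h.2.card y z

/-- `π` is a coupling of `μ` and `ν`. -/
def IsCoupling (μ ν : V → ℝ) (π : V → V → ℝ) : Prop :=
  (∀ u v, 0 ≤ π u v) ∧ (∀ u, ∑ v, π u v = μ u) ∧ (∀ v, ∑ u, π u v = ν v)

/-- The 1-Wasserstein functional associated to a cost `d`. -/
noncomputable def Wd (d : V → V → ℝ) (μ ν : V → ℝ) : ℝ :=
  sInf {s | ∃ π, IsCoupling μ ν π ∧ s = ∑ u, ∑ v, π u v * d u v}

/-- Length of a directed hyperedge: `L(h) = min_{x∈A_h, y∈B_h} d(x,y)`. -/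
noncomputable def Ldi (G : DHyp V) (h : Finset V × Finset V) : ℝ :=
  sInf {s | ∃ x ∈ h.1, ∃ y ∈ h.2, s = ddist G x y}

/-- Ollivier–Ricci curvature `κ_α(h)` of a directed hyperedge. -/
noncomputable def kappaDE (G : DHyp V) (α : ℝ) (h : Finset V × Finset V) : ℝ :=
  1 - Wd (ddist G) (muA G α h) (muB G α h) / Ldi G h

/-- Single-vertex in-measure `μ^α_{u^{in}}`. -/
noncomputable def muInPt (G : DHyp V) (α : ℝ) (u z : V) : ℝ :=
  if z = u then α
  else if z ∈ GammaIn G u then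
    (1 - α) * ∑ h ∈ G.E.filter (fun h => u ∈ h.2 ∧ z ∈ h.1),
      (1 / (h.1.card : ℝ)) * (G.w h / ∑ h' ∈ G.E.filter (fun h'' => u ∈ h''.2), G.w h')
  else 0

/-- Single-vertex out-measure `μ^α_{v^{out}}`. -/
noncomputable def muOutPt (G : DHyp V) (α : ℝ) (v z : V) : ℝ :=
  if z = v then α
  else if z ∈ GammaOut G v then
    (1 - α) * ∑ h ∈ G.E.filter (fun h => v ∈ h.1 ∧ z ∈ h.2),
      (1 / (h.2.card : ℝ)) * (G.w h / ∑ h' ∈ G.E.filter (fun h'' => v ∈ h''.1), G.w h')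
  else 0

/-- Ollivier–Ricci curvature `κ_α(u,v)` between two vertices. -/
noncomputable def kappaDV (G : DHyp V) (α : ℝ) (u v : V) : ℝ :=
  1 - Wd (ddist G) (muInPt G α u) (muOutPt G α v) / ddist G u v

/-- Maximal hyperedge weight. -/
noncomputable def maxWd (G : DHyp V) : ℝ := sSup {x | ∃ h ∈ G.E, x = G.w h}

/-- Diameter of a directed hypergraph. -/
noncomputable def diamD (G : DHyp V) : ℝ := sSup {s | ∃ u v : V, s = ddist G u v}

/-- An oriented hypergraph: inputs and outputs are disjoint, the reversal of each
hyperedge is a hyperedge, and weights are reversal-symmetric. -/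
def Oriented (G : DHyp V) : Prop :=
  ∀ h ∈ G.E, h.1 ∩ h.2 = ∅ ∧ (h.2, h.1) ∈ G.E ∧ G.w (h.2, h.1) = G.w h

/-- `B_H = max_h |B_h|`. -/
def BH (G : DHyp V) : ℕ := G.E.sup (fun h => h.2.card)

/-- `A_H = max_h |A_h|`. -/
def AH (G : DHyp V) : ℕ := G.E.sup (fun h => h.1.card)


section Aux12

variable (G : DHyp V)

lemma pathSum_nonneg {γ : List (Finset V × Finset V)} (hγ : ∀ e ∈ γ, e ∈ G.E) :
    0 ≤ (γ.map G.w).sum := by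
  apply List.sum_nonneg
  intro x hx
  obtain ⟨e, he, rfl⟩ := List.mem_map.1 hx
  exact (G.pos e (hγ e he)).le

lemma ddist_nonneg (u v : V) : 0 ≤ ddist G u v := by
  unfold ddist
  split
  · exact le_refl 0
  · apply Real.sInf_nonneg
    rintro s ⟨γ, hγ, rfl⟩
    exact pathSum_nonneg G hγ.2.1

lemma ddist_self (u : V) : ddist G u u = 0 := by
  unfold ddist; simp

lemma ddist_le_path {γ : List (Finset V × Finset V)} {u v : V} (hγ : IsDipath G γ u v) :
    ddist G u v ≤ (γ.map G.w).sum := by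
  unfold ddist
  split
  · exact pathSum_nonneg G hγ.2.1
  · exact csInf_le ⟨0, by rintro s ⟨γ', hγ', rfl⟩; exact pathSum_nonneg G hγ'.2.1⟩ ⟨γ, hγ, rfl⟩

lemma IsDipath.append' {γ₁ γ₂ : List (Finset V × Finset V)} {u v w : V}
    (h1 : IsDipath G γ₁ u v) (h2 : IsDipath G γ₂ v w) : IsDipath G (γ₁ ++ γ₂) u w := by
  obtain ⟨hne1, hmem1, hhead1, hlast1, hch1⟩ := h1
  obtain ⟨hne2, hmem2, hhead2, hlast2, hch2⟩ := h2
  refine ⟨by simp [hne1], fun e he => (List.mem_append.1 he).elim (hmem1 e) (hmem2 e), ?_, ?_, ?_⟩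
  · intro h0 hh0
    rw [List.head?_append_of_ne_nil _ hne1] at hh0
    exact hhead1 h0 hh0
  · intro hl hhl
    rw [List.getLast?_append_of_ne_nil _ hne2] at hhl
    exact hlast2 hl hhl
  · apply List.isChain_append.2
    refine ⟨hch1, hch2, ?_⟩
    intro a ha b hb
    exact ⟨v, Finset.mem_inter.2 ⟨hlast1 a ha, hhead2 b hb⟩⟩

lemma ddist_triangle (hsc : StronglyConnected G) (u v w : V) :
    ddist G u w ≤ ddist G u v + ddist G v w := by
  by_cases huv : u = v
  · subst huv; rw [ddist_self]; simp
  by_cases hvw : v = w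
  · subst hvw; rw [ddist_self]; simp
  by_cases huw : u = w
  · subst huw
    rw [ddist_self]
    have := ddist_nonneg G u v
    have := ddist_nonneg G v u
    linarith
  have hSuv : {s | ∃ γ, IsDipath G γ u v ∧ s = (γ.map G.w).sum}.Nonempty := by
    obtain ⟨γ, hγ⟩ := hsc u v huv; exact ⟨_, γ, hγ, rfl⟩
  have hSvw : {s | ∃ γ, IsDipath G γ v w ∧ s = (γ.map G.w).sum}.Nonempty := by
    obtain ⟨γ, hγ⟩ := hsc v w hvw; exact ⟨_, γ, hγ, rfl⟩
  have key : ∀ s₁ ∈ {s | ∃ γ, IsDipath G γ u v ∧ s = (γ.map G.w).sum},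
      ∀ s₂ ∈ {s | ∃ γ, IsDipath G γ v w ∧ s = (γ.map G.w).sum}, ddist G u w ≤ s₁ + s₂ := by
    rintro s₁ ⟨γ₁, hγ₁, rfl⟩ s₂ ⟨γ₂, hγ₂, rfl⟩
    have := ddist_le_path G (IsDipath.append' G hγ₁ hγ₂)
    simpa using this
  have euv : ddist G u v = sInf {s | ∃ γ, IsDipath G γ u v ∧ s = (γ.map G.w).sum} := by
    unfold ddist; rw [if_neg huv]
  have evw : ddist G v w = sInf {s | ∃ γ, IsDipath G γ v w ∧ s = (γ.map G.w).sum} := by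
    unfold ddist; rw [if_neg hvw]
  have h1 : ddist G u w - ddist G v w ≤ ddist G u v := by
    rw [euv]
    apply le_csInf hSuv
    intro s₁ hs₁
    have h2 : ddist G u w - s₁ ≤ ddist G v w := by
      rw [evw]
      apply le_csInf hSvw
      intro s₂ hs₂
      linarith [key s₁ hs₁ s₂ hs₂]
    linarith
  linarith

lemma ddist_le_edge {e : Finset V × Finset V} (he : e ∈ G.E) {u v : V}
    (hu : u ∈ e.1) (hv : v ∈ e.2) : ddist G u v ≤ G.w e := by
  have hp : IsDipath G [e] u v := by
    refine ⟨by simp, ?_, ?_, ?_, ?_⟩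
    · intro e' he'; simp at he'; subst he'; exact he
    · intro h0 hh0; simp at hh0; subst hh0; exact hu
    · intro hl hhl; simp at hhl; subst hhl; exact hv
    · exact List.isChain_singleton e
  simpa using ddist_le_path G hp

lemma w_le_maxWd {e : Finset V × Finset V} (he : e ∈ G.E) : G.w e ≤ maxWd G := by
  unfold maxWd
  apply le_csSup
  · have hset : {x | ∃ h ∈ G.E, x = G.w h} = ↑(G.E.image G.w) := by
      ext x; simp [eq_comm]
    rw [hset]
    exact (G.E.image G.w).finite_toSet.bddAbove
  · exact ⟨e, he, rfl⟩

lemma muIn_nonneg {α : ℝ} (hα : α ∈ Set.Icc (0:ℝ) 1) (n : ℕ) (x z : V) :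
    0 ≤ muIn G α n x z := by
  unfold muIn
  split
  · exact div_nonneg hα.1 (Nat.cast_nonneg n)
  split
  · apply mul_nonneg (by linarith [hα.2])
    apply Finset.sum_nonneg
    intro e he'
    have he : e ∈ G.E := (Finset.mem_filter.1 he').1
    apply mul_nonneg
    · apply div_nonneg zero_le_one
      positivity
    · apply div_nonneg (G.pos e he).le
      apply Finset.sum_nonneg
      intro e' he''
      exact (G.pos e' (Finset.mem_filter.1 he'').1).le
  · exact le_refl 0

lemma muOut_nonneg {α : ℝ} (hα : α ∈ Set.Icc (0:ℝ) 1) (m : ℕ) (y z : V) :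
    0 ≤ muOut G α m y z := by
  unfold muOut
  split
  · exact div_nonneg hα.1 (Nat.cast_nonneg m)
  split
  · apply mul_nonneg (by linarith [hα.2])
    apply Finset.sum_nonneg
    intro e he'
    have he : e ∈ G.E := (Finset.mem_filter.1 he').1
    apply mul_nonneg
    · apply div_nonneg zero_le_one
      positivity
    · apply div_nonneg (G.pos e he).le
      apply Finset.sum_nonneg
      intro e' he''
      exact (G.pos e' (Finset.mem_filter.1 he'').1).le
  · exact le_refl 0

lemma sum_muIn (hor : Oriented G) {x : V} (hx : ∃ e ∈ G.E, x ∈ e.2) (α : ℝ) (n : ℕ) :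
    ∑ z, muIn G α n x z = 1 / n := by
  classical
  have hWpos : 0 < ∑ e ∈ G.E.filter (fun e => x ∈ e.2), G.w e := by
    obtain ⟨e, he, hxe⟩ := hx
    exact Finset.sum_pos' (fun e' he' => (G.pos e' (Finset.mem_filter.1 he').1).le)
      ⟨e, Finset.mem_filter.2 ⟨he, hxe⟩, G.pos e he⟩
  have hxnot : ∀ e ∈ G.E.filter (fun e => x ∈ e.2), x ∉ e.1 := by
    intro e he hx1
    have hd := (hor e (Finset.mem_filter.1 he).1).1
    have : x ∈ e.1 ∩ e.2 := Finset.mem_inter.2 ⟨hx1, (Finset.mem_filter.1 he).2⟩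
    rw [hd] at this
    exact absurd this (Finset.notMem_empty x)
  rw [← Finset.sum_erase_add Finset.univ _ (Finset.mem_univ x)]
  have hxx : muIn G α n x x = α / n := by unfold muIn; simp
  have hz : ∀ z ∈ Finset.univ.erase x,
      muIn G α n x z = (1 - α) * ∑ e ∈ (G.E.filter (fun e => x ∈ e.2)).filter (fun e => z ∈ e.1),
        (1 / ((n : ℝ) * e.1.card)) *
          (G.w e / ∑ e' ∈ G.E.filter (fun e'' => x ∈ e''.2), G.w e') := by
    intro z hzz
    have hzx : z ≠ x := (Finset.mem_erase.1 hzz).1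
    have hfe : G.E.filter (fun e => x ∈ e.2 ∧ z ∈ e.1)
        = (G.E.filter (fun e => x ∈ e.2)).filter (fun e => z ∈ e.1) := by
      rw [Finset.filter_filter]
    unfold muIn
    rw [if_neg hzx]
    split
    · rw [hfe]
    · rename_i hg
      have hempty : (G.E.filter (fun e => x ∈ e.2)).filter (fun e => z ∈ e.1) = ∅ := by
        rw [Finset.filter_eq_empty_iff]
        intro e he hz1
        apply hg
        unfold GammaIn
        rw [Finset.mem_filter]
        exact ⟨Finset.mem_univ z, e, (Finset.mem_filter.1 he).1, (Finset.mem_filter.1 he).2, hz1⟩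
      rw [hempty]
      simp
  rw [Finset.sum_congr rfl hz, hxx, ← Finset.mul_sum]
  have swap : ∑ z ∈ Finset.univ.erase x,
      ∑ e ∈ (G.E.filter (fun e => x ∈ e.2)).filter (fun e => z ∈ e.1),
        (1 / ((n : ℝ) * e.1.card)) *
          (G.w e / ∑ e' ∈ G.E.filter (fun e'' => x ∈ e''.2), G.w e')
      = ∑ e ∈ G.E.filter (fun e => x ∈ e.2), (e.1.card : ℝ) *
          ((1 / ((n : ℝ) * e.1.card)) *
            (G.w e / ∑ e' ∈ G.E.filter (fun e'' => x ∈ e''.2), G.w e')) := by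
    have step : ∀ z ∈ Finset.univ.erase x,
        ∑ e ∈ (G.E.filter (fun e => x ∈ e.2)).filter (fun e => z ∈ e.1),
          (1 / ((n : ℝ) * e.1.card)) *
            (G.w e / ∑ e' ∈ G.E.filter (fun e'' => x ∈ e''.2), G.w e')
        = ∑ e ∈ G.E.filter (fun e => x ∈ e.2), (if z ∈ e.1 then
            (1 / ((n : ℝ) * e.1.card)) *
              (G.w e / ∑ e' ∈ G.E.filter (fun e'' => x ∈ e''.2), G.w e') else 0) := by
      intro z _
      rw [Finset.sum_filter]
    rw [Finset.sum_congr rfl step, Finset.sum_comm]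
    refine Finset.sum_congr rfl fun e he => ?_
    rw [Finset.sum_ite_mem]
    have hint : (Finset.univ.erase x) ∩ e.1 = e.1 := by
      ext t
      simp only [Finset.mem_inter, Finset.mem_erase, Finset.mem_univ, and_true, true_and]
      constructor
      · exact fun ht => ht.2
      · intro ht
        exact ⟨fun hxt => hxnot e he (hxt ▸ ht), ht⟩
    rw [hint, Finset.sum_const, nsmul_eq_mul]
  rw [swap]
  have per : ∀ e ∈ G.E.filter (fun e => x ∈ e.2), (e.1.card : ℝ) *
      ((1 / ((n : ℝ) * e.1.card)) *
        (G.w e / ∑ e' ∈ G.E.filter (fun e'' => x ∈ e''.2), G.w e'))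
      = (1 / (n : ℝ)) * (G.w e / ∑ e' ∈ G.E.filter (fun e'' => x ∈ e''.2), G.w e') := by
    intro e he
    have hc : (e.1.card : ℝ) ≠ 0 := by
      have := G.nonempA e (Finset.mem_filter.1 he).1
      exact_mod_cast Finset.card_ne_zero_of_mem (this.choose_spec)
    by_cases hn : (n : ℝ) = 0
    · rw [hn]; simp
    · field_simp
  rw [Finset.sum_congr rfl per, ← Finset.mul_sum, ← Finset.sum_div, div_self hWpos.ne']
  rw [mul_one, mul_one_div, ← add_div]
  norm_num

lemma sum_muOut (hor : Oriented G) {y : V} (hy : ∃ e ∈ G.E, y ∈ e.1) (α : ℝ) (m : ℕ) :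
    ∑ z, muOut G α m y z = 1 / m := by
  classical
  have hWpos : 0 < ∑ e ∈ G.E.filter (fun e => y ∈ e.1), G.w e := by
    obtain ⟨e, he, hye⟩ := hy
    exact Finset.sum_pos' (fun e' he' => (G.pos e' (Finset.mem_filter.1 he').1).le)
      ⟨e, Finset.mem_filter.2 ⟨he, hye⟩, G.pos e he⟩
  have hynot : ∀ e ∈ G.E.filter (fun e => y ∈ e.1), y ∉ e.2 := by
    intro e he hy2
    have hd := (hor e (Finset.mem_filter.1 he).1).1
    have : y ∈ e.1 ∩ e.2 := Finset.mem_inter.2 ⟨(Finset.mem_filter.1 he).2, hy2⟩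
    rw [hd] at this
    exact absurd this (Finset.notMem_empty y)
  rw [← Finset.sum_erase_add Finset.univ _ (Finset.mem_univ y)]
  have hyy : muOut G α m y y = α / m := by unfold muOut; simp
  have hz : ∀ z ∈ Finset.univ.erase y,
      muOut G α m y z = (1 - α) * ∑ e ∈ (G.E.filter (fun e => y ∈ e.1)).filter (fun e => z ∈ e.2),
        (1 / ((m : ℝ) * e.2.card)) *
          (G.w e / ∑ e' ∈ G.E.filter (fun e'' => y ∈ e''.1), G.w e') := by
    intro z hzz
    have hzy : z ≠ y := (Finset.mem_erase.1 hzz).1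
    have hfe : G.E.filter (fun e => y ∈ e.1 ∧ z ∈ e.2)
        = (G.E.filter (fun e => y ∈ e.1)).filter (fun e => z ∈ e.2) := by
      rw [Finset.filter_filter]
    unfold muOut
    rw [if_neg hzy]
    split
    · rw [hfe]
    · rename_i hg
      have hempty : (G.E.filter (fun e => y ∈ e.1)).filter (fun e => z ∈ e.2) = ∅ := by
        rw [Finset.filter_eq_empty_iff]
        intro e he hz2
        apply hg
        unfold GammaOut
        rw [Finset.mem_filter]
        exact ⟨Finset.mem_univ z, e, (Finset.mem_filter.1 he).1, (Finset.mem_filter.1 he).2, hz2⟩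
      rw [hempty]
      simp
  rw [Finset.sum_congr rfl hz, hyy, ← Finset.mul_sum]
  have swap : ∑ z ∈ Finset.univ.erase y,
      ∑ e ∈ (G.E.filter (fun e => y ∈ e.1)).filter (fun e => z ∈ e.2),
        (1 / ((m : ℝ) * e.2.card)) *
          (G.w e / ∑ e' ∈ G.E.filter (fun e'' => y ∈ e''.1), G.w e')
      = ∑ e ∈ G.E.filter (fun e => y ∈ e.1), (e.2.card : ℝ) *
          ((1 / ((m : ℝ) * e.2.card)) *
            (G.w e / ∑ e' ∈ G.E.filter (fun e'' => y ∈ e''.1), G.w e')) := by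
    have step : ∀ z ∈ Finset.univ.erase y,
        ∑ e ∈ (G.E.filter (fun e => y ∈ e.1)).filter (fun e => z ∈ e.2),
          (1 / ((m : ℝ) * e.2.card)) *
            (G.w e / ∑ e' ∈ G.E.filter (fun e'' => y ∈ e''.1), G.w e')
        = ∑ e ∈ G.E.filter (fun e => y ∈ e.1), (if z ∈ e.2 then
            (1 / ((m : ℝ) * e.2.card)) *
              (G.w e / ∑ e' ∈ G.E.filter (fun e'' => y ∈ e''.1), G.w e') else 0) := by
      intro z _
      rw [Finset.sum_filter]
    rw [Finset.sum_congr rfl step, Finset.sum_comm]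
    refine Finset.sum_congr rfl fun e he => ?_
    rw [Finset.sum_ite_mem]
    have hint : (Finset.univ.erase y) ∩ e.2 = e.2 := by
      ext t
      simp only [Finset.mem_inter, Finset.mem_erase, Finset.mem_univ, and_true, true_and]
      constructor
      · exact fun ht => ht.2
      · intro ht
        exact ⟨fun hyt => hynot e he (hyt ▸ ht), ht⟩
    rw [hint, Finset.sum_const, nsmul_eq_mul]
  rw [swap]
  have per : ∀ e ∈ G.E.filter (fun e => y ∈ e.1), (e.2.card : ℝ) *
      ((1 / ((m : ℝ) * e.2.card)) *
        (G.w e / ∑ e' ∈ G.E.filter (fun e'' => y ∈ e''.1), G.w e'))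
      = (1 / (m : ℝ)) * (G.w e / ∑ e' ∈ G.E.filter (fun e'' => y ∈ e''.1), G.w e') := by
    intro e he
    have hc : (e.2.card : ℝ) ≠ 0 := by
      have := G.nonempB e (Finset.mem_filter.1 he).1
      exact_mod_cast Finset.card_ne_zero_of_mem (this.choose_spec)
    by_cases hm : (m : ℝ) = 0
    · rw [hm]; simp
    · field_simp
  rw [Finset.sum_congr rfl per, ← Finset.mul_sum, ← Finset.sum_div, div_self hWpos.ne']
  rw [mul_one, mul_one_div, ← add_div]
  norm_num

end Aux12


section Aux12b

variable (G : DHyp V)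

lemma Ldi_le {h : Finset V × Finset V} {x y : V} (hx : x ∈ h.1) (hy : y ∈ h.2) :
    Ldi G h ≤ ddist G x y := by
  unfold Ldi
  apply csInf_le
  · refine ⟨0, ?_⟩
    rintro s ⟨x', hx', y', hy', rfl⟩
    exact ddist_nonneg G x' y'
  · exact ⟨x, hx, y, hy, rfl⟩

lemma Ldi_pos (hor : Oriented G) (hsc : StronglyConnected G)
    {h : Finset V × Finset V} (hh : h ∈ G.E) : 0 < Ldi G h := by
  classical
  set c := G.E.inf' ⟨h, hh⟩ G.w with hc
  have hcpos : 0 < c := by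
    rw [hc]; apply (Finset.lt_inf'_iff _).2
    exact fun e he => G.pos e he
  have hdlb : ∀ x ∈ h.1, ∀ y ∈ h.2, c ≤ ddist G x y := by
    intro x hx y hy
    have hxy : x ≠ y := by
      intro he
      have : x ∈ h.1 ∩ h.2 := Finset.mem_inter.2 ⟨hx, he ▸ hy⟩
      rw [(hor h hh).1] at this
      exact absurd this (Finset.notMem_empty x)
    unfold ddist
    rw [if_neg hxy]
    apply le_csInf
    · obtain ⟨γ, hγ⟩ := hsc x y hxy
      exact ⟨_, γ, hγ, rfl⟩
    rintro s ⟨γ, hγ, rfl⟩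
    obtain ⟨hne, hmem, -, -, -⟩ := hγ
    obtain ⟨e, t, rfl⟩ : ∃ e t, γ = e :: t := by
      cases γ with
      | nil => exact absurd rfl hne
      | cons e t => exact ⟨e, t, rfl⟩
    have h1 : c ≤ G.w e := Finset.inf'_le _ (hmem e (by simp))
    have h2 : 0 ≤ (t.map G.w).sum := pathSum_nonneg G (fun e' he' => hmem e' (by simp [he']))
    simp only [List.map_cons, List.sum_cons]
    linarith
  have : c ≤ Ldi G h := by
    unfold Ldi
    apply le_csInf
    · obtain ⟨x, hx⟩ := G.nonempA h hh
      obtain ⟨y, hy⟩ := G.nonempB h hh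
      exact ⟨_, x, hx, y, hy, rfl⟩
    · rintro s ⟨x, hx, y, hy, rfl⟩
      exact hdlb x hx y hy
  linarith

lemma muA_nonneg {α : ℝ} (hα : α ∈ Set.Icc (0:ℝ) 1) (h : Finset V × Finset V) (z : V) :
    0 ≤ muA G α h z :=
  Finset.sum_nonneg fun x _ => muIn_nonneg G hα _ x z

lemma muB_nonneg {α : ℝ} (hα : α ∈ Set.Icc (0:ℝ) 1) (h : Finset V × Finset V) (z : V) :
    0 ≤ muB G α h z :=
  Finset.sum_nonneg fun y _ => muOut_nonneg G hα _ y z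

lemma sum_muA (hor : Oriented G) {h : Finset V × Finset V} (hh : h ∈ G.E) (α : ℝ) :
    ∑ z, muA G α h z = 1 := by
  unfold muA
  rw [Finset.sum_comm]
  have hcards : (h.1.card : ℝ) ≠ 0 := by
    exact_mod_cast (Finset.card_pos.2 (G.nonempA h hh)).ne'
  have step : ∀ x ∈ h.1, ∑ z, muIn G α h.1.card x z = 1 / h.1.card := by
    intro x hx
    exact sum_muIn G hor ⟨(h.2, h.1), (hor h hh).2.1, hx⟩ α h.1.card
  rw [Finset.sum_congr rfl step, Finset.sum_const, nsmul_eq_mul, mul_one_div,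
    div_self hcards]

lemma sum_muB (hor : Oriented G) {h : Finset V × Finset V} (hh : h ∈ G.E) (α : ℝ) :
    ∑ z, muB G α h z = 1 := by
  unfold muB
  rw [Finset.sum_comm]
  have hcards : (h.2.card : ℝ) ≠ 0 := by
    exact_mod_cast (Finset.card_pos.2 (G.nonempB h hh)).ne'
  have step : ∀ y ∈ h.2, ∑ z, muOut G α h.2.card y z = 1 / h.2.card := by
    intro y hy
    exact sum_muOut G hor ⟨(h.2, h.1), (hor h hh).2.1, hy⟩ α h.2.card
  rw [Finset.sum_congr rfl step, Finset.sum_const, nsmul_eq_mul, mul_one_div,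
    div_self hcards]

lemma muA_on_A {α : ℝ} (hα : α ∈ Set.Icc (0:ℝ) 1) {h : Finset V × Finset V} (hh : h ∈ G.E) :
    α ≤ ∑ z ∈ h.1, muA G α h z := by
  have hcards : (h.1.card : ℝ) ≠ 0 := by
    exact_mod_cast (Finset.card_pos.2 (G.nonempA h hh)).ne'
  have h1 : ∀ z ∈ h.1, α / h.1.card ≤ muA G α h z := by
    intro z hz
    have hdiag : muIn G α h.1.card z z = α / h.1.card := by unfold muIn; simp
    calc α / h.1.card = muIn G α h.1.card z z := hdiag.symm
      _ ≤ ∑ x ∈ h.1, muIn G α h.1.card x z :=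
          Finset.single_le_sum (fun x _ => muIn_nonneg G hα _ x z) hz
  calc α = h.1.card * (α / h.1.card) := by field_simp
    _ = ∑ _z ∈ h.1, α / h.1.card := by rw [Finset.sum_const, nsmul_eq_mul]
    _ ≤ ∑ z ∈ h.1, muA G α h z := Finset.sum_le_sum h1

lemma muB_on_B {α : ℝ} (hα : α ∈ Set.Icc (0:ℝ) 1) {h : Finset V × Finset V} (hh : h ∈ G.E) :
    α ≤ ∑ z ∈ h.2, muB G α h z := by
  have hcards : (h.2.card : ℝ) ≠ 0 := by
    exact_mod_cast (Finset.card_pos.2 (G.nonempB h hh)).ne'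
  have h1 : ∀ z ∈ h.2, α / h.2.card ≤ muB G α h z := by
    intro z hz
    have hdiag : muOut G α h.2.card z z = α / h.2.card := by unfold muOut; simp
    calc α / h.2.card = muOut G α h.2.card z z := hdiag.symm
      _ ≤ ∑ y ∈ h.2, muOut G α h.2.card y z :=
          Finset.single_le_sum (fun y _ => muOut_nonneg G hα _ y z) hz
  calc α = h.2.card * (α / h.2.card) := by field_simp
    _ = ∑ _z ∈ h.2, α / h.2.card := by rw [Finset.sum_const, nsmul_eq_mul]
    _ ≤ ∑ z ∈ h.2, muB G α h z := Finset.sum_le_sum h1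

lemma muA_supp (hor : Oriented G) {α : ℝ} {h : Finset V × Finset V} {u : V}
    (hu : muA G α h u ≠ 0) (hun : u ∉ h.1) :
    ∃ x ∈ h.1, ddist G x u ≤ maxWd G := by
  obtain ⟨x, hx, hne⟩ : ∃ x ∈ h.1, muIn G α h.1.card x u ≠ 0 := by
    by_contra hcon
    push_neg at hcon
    exact hu (Finset.sum_eq_zero hcon)
  have hux : u ≠ x := fun he => hun (he ▸ hx)
  unfold muIn at hne
  rw [if_neg hux] at hne
  by_cases hg : u ∈ GammaIn G x
  · obtain ⟨e, he, hxe, hue⟩ : ∃ e ∈ G.E, x ∈ e.2 ∧ u ∈ e.1 := by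
      have := (Finset.mem_filter.1 hg).2
      obtain ⟨e, he, h1, h2⟩ := this
      exact ⟨e, he, h1, h2⟩
    refine ⟨x, hx, ?_⟩
    have hrev := (hor e he).2.1
    have hd : ddist G x u ≤ G.w (e.2, e.1) := ddist_le_edge G hrev hxe hue
    have hw : G.w (e.2, e.1) = G.w e := (hor e he).2.2
    have := w_le_maxWd G he
    linarith
  · rw [if_neg hg] at hne
    exact absurd rfl hne

lemma muB_supp (hor : Oriented G) {α : ℝ} {h : Finset V × Finset V} {v : V}
    (hv : muB G α h v ≠ 0) (hvn : v ∉ h.2) :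
    ∃ y ∈ h.2, ddist G v y ≤ maxWd G := by
  obtain ⟨y, hy, hne⟩ : ∃ y ∈ h.2, muOut G α h.2.card y v ≠ 0 := by
    by_contra hcon
    push_neg at hcon
    exact hv (Finset.sum_eq_zero hcon)
  have hvy : v ≠ y := fun he => hvn (he ▸ hy)
  unfold muOut at hne
  rw [if_neg hvy] at hne
  by_cases hg : v ∈ GammaOut G y
  · obtain ⟨e, he, hye, hve⟩ : ∃ e ∈ G.E, y ∈ e.1 ∧ v ∈ e.2 := by
      have := (Finset.mem_filter.1 hg).2
      obtain ⟨e, he, h1, h2⟩ := this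
      exact ⟨e, he, h1, h2⟩
    refine ⟨y, hy, ?_⟩
    have hrev := (hor e he).2.1
    have hd : ddist G v y ≤ G.w (e.2, e.1) := ddist_le_edge G hrev hve hye
    have hw : G.w (e.2, e.1) = G.w e := (hor e he).2.2
    have := w_le_maxWd G he
    linarith
  · rw [if_neg hg] at hne
    exact absurd rfl hne

end Aux12b

/-- curvature upper bound on oriented hypergraphs. -/
theorem stmt12 (G : DHyp V) (hor : Oriented G) (hsc : StronglyConnected G)
    (α : ℝ) (hα : α ∈ Set.Icc (0:ℝ) 1) (h : Finset V × Finset V) (hh : h ∈ G.E) :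
    kappaDE G α h ≤ (1 - α) * (2 * maxWd G) / Ldi G h := by
  classical
  have hα0 := hα.1
  have hα1 := hα.2
  have hMnn : 0 ≤ maxWd G := le_trans (G.pos h hh).le (w_le_maxWd G hh)
  have hLpos : 0 < Ldi G h := Ldi_pos G hor hsc hh
  have hAnn : ∀ z, 0 ≤ muA G α h z := muA_nonneg G hα h
  have hBnn : ∀ z, 0 ≤ muB G α h z := muB_nonneg G hα h
  have hAsum : ∑ z, muA G α h z = 1 := sum_muA G hor hh α
  have hBsum : ∑ z, muB G α h z = 1 := sum_muB G hor hh α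
  have hAα : α ≤ ∑ z ∈ h.1, muA G α h z := muA_on_A G hα hh
  have hBα : α ≤ ∑ z ∈ h.2, muB G α h z := muB_on_B G hα hh
  -- Wasserstein lower bound
  have hW : Ldi G h - (1 - α) * (2 * maxWd G)
      ≤ Wd (ddist G) (muA G α h) (muB G α h) := by
    unfold Wd
    apply le_csInf
    · refine ⟨_, ⟨fun u v => muA G α h u * muB G α h v,
        ⟨fun u v => mul_nonneg (hAnn u) (hBnn v),
         fun u => by rw [← Finset.mul_sum, hBsum, mul_one],
         fun v => by rw [← Finset.sum_mul, hAsum, one_mul]⟩, rfl⟩⟩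
    rintro s ⟨π, ⟨hπnn, hπrow, hπcol⟩, rfl⟩
    have key : ∀ u v, 0 < π u v →
        Ldi G h ≤ (if u ∈ h.1 then 0 else maxWd G) + ddist G u v
          + (if v ∈ h.2 then 0 else maxWd G) := by
      intro u v hπ
      have hu : 0 < muA G α h u := lt_of_lt_of_le hπ (by
        rw [← hπrow u]
        exact Finset.single_le_sum (fun z _ => hπnn u z) (Finset.mem_univ v))
      have hv : 0 < muB G α h v := lt_of_lt_of_le hπ (by
        rw [← hπcol v]
        exact Finset.single_le_sum (fun z _ => hπnn z v) (Finset.mem_univ u))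
      obtain ⟨x, hx, hxu⟩ : ∃ x ∈ h.1, ddist G x u ≤ (if u ∈ h.1 then 0 else maxWd G) := by
        by_cases hmem : u ∈ h.1
        · exact ⟨u, hmem, by rw [if_pos hmem, ddist_self]⟩
        · obtain ⟨x, hx, hxu⟩ := muA_supp G hor hu.ne' hmem
          exact ⟨x, hx, by rwa [if_neg hmem]⟩
      obtain ⟨y, hy, hvy⟩ : ∃ y ∈ h.2, ddist G v y ≤ (if v ∈ h.2 then 0 else maxWd G) := by
        by_cases hmem : v ∈ h.2
        · exact ⟨v, hmem, by rw [if_pos hmem, ddist_self]⟩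
        · obtain ⟨y, hy, hvy⟩ := muB_supp G hor hv.ne' hmem
          exact ⟨y, hy, by rwa [if_neg hmem]⟩
      have h1 : Ldi G h ≤ ddist G x y := Ldi_le G hx hy
      have h2 : ddist G x y ≤ ddist G x u + ddist G u y := ddist_triangle G hsc x u y
      have h3 : ddist G u y ≤ ddist G u v + ddist G v y := ddist_triangle G hsc u v y
      linarith
    have step1 : ∀ u v, π u v * (Ldi G h - (if u ∈ h.1 then 0 else maxWd G)
        - (if v ∈ h.2 then 0 else maxWd G)) ≤ π u v * ddist G u v := by
      intro u v
      rcases eq_or_lt_of_le (hπnn u v) with he | hl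
      · rw [← he]; simp
      · have hk := key u v hl
        have := mul_le_mul_of_nonneg_left (by linarith : (Ldi G h
          - (if u ∈ h.1 then 0 else maxWd G) - (if v ∈ h.2 then 0 else maxWd G))
          ≤ ddist G u v) hl.le
        exact this
    have expand : ∑ u, ∑ v, π u v * (Ldi G h - (if u ∈ h.1 then 0 else maxWd G)
          - (if v ∈ h.2 then 0 else maxWd G))
        = (∑ u, ∑ v, π u v * Ldi G h)
          - (∑ u, ∑ v, π u v * (if u ∈ h.1 then 0 else maxWd G))
          - (∑ u, ∑ v, π u v * (if v ∈ h.2 then 0 else maxWd G)) := by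
      rw [← Finset.sum_sub_distrib, ← Finset.sum_sub_distrib]
      refine Finset.sum_congr rfl fun u _ => ?_
      rw [← Finset.sum_sub_distrib, ← Finset.sum_sub_distrib]
      refine Finset.sum_congr rfl fun v _ => ?_
      ring
    have c1 : ∑ u, ∑ v, π u v * Ldi G h = Ldi G h := by
      calc ∑ u, ∑ v, π u v * Ldi G h = ∑ u, muA G α h u * Ldi G h := by
            refine Finset.sum_congr rfl fun u _ => ?_
            rw [← Finset.sum_mul, hπrow]
        _ = Ldi G h := by rw [← Finset.sum_mul, hAsum, one_mul]
    have c2 : ∑ u, ∑ v, π u v * (if u ∈ h.1 then 0 else maxWd G)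
        = ∑ u, muA G α h u * (if u ∈ h.1 then 0 else maxWd G) := by
      refine Finset.sum_congr rfl fun u _ => ?_
      rw [← Finset.sum_mul, hπrow]
    have c3 : ∑ u, ∑ v, π u v * (if v ∈ h.2 then 0 else maxWd G)
        = ∑ v, muB G α h v * (if v ∈ h.2 then 0 else maxWd G) := by
      rw [Finset.sum_comm]
      refine Finset.sum_congr rfl fun v _ => ?_
      rw [← Finset.sum_mul, hπcol]
    have bA : ∑ u, muA G α h u * (if u ∈ h.1 then 0 else maxWd G) ≤ (1 - α) * maxWd G := by
      have split : ∑ u ∈ Finset.univ \ h.1, (fun u => muA G α h u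
            * (if u ∈ h.1 then 0 else maxWd G)) u
          + ∑ u ∈ h.1, (fun u => muA G α h u * (if u ∈ h.1 then 0 else maxWd G)) u
          = ∑ u, muA G α h u * (if u ∈ h.1 then 0 else maxWd G) :=
        Finset.sum_sdiff (Finset.subset_univ h.1)
      have z1 : ∑ u ∈ h.1, muA G α h u * (if u ∈ h.1 then 0 else maxWd G) = 0 :=
        Finset.sum_eq_zero fun u hu => by rw [if_pos hu, mul_zero]
      have z2 : ∑ u ∈ Finset.univ \ h.1, muA G α h u * (if u ∈ h.1 then 0 else maxWd G)
          = (∑ u ∈ Finset.univ \ h.1, muA G α h u) * maxWd G := by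
        rw [Finset.sum_mul]
        refine Finset.sum_congr rfl fun u hu => ?_
        rw [if_neg (Finset.mem_sdiff.1 hu).2]
      have z3 : ∑ u ∈ Finset.univ \ h.1, muA G α h u
          = 1 - ∑ u ∈ h.1, muA G α h u := by
        have := Finset.sum_sdiff (f := muA G α h) (Finset.subset_univ h.1)
        linarith [hAsum]
      have z4 : ∑ u ∈ Finset.univ \ h.1, muA G α h u ≤ 1 - α := by
        rw [z3]; linarith
      calc ∑ u, muA G α h u * (if u ∈ h.1 then 0 else maxWd G)
          = (∑ u ∈ Finset.univ \ h.1, muA G α h u) * maxWd G := by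
            rw [← split]; simp only at *; rw [z1, add_zero, z2]
        _ ≤ (1 - α) * maxWd G := mul_le_mul_of_nonneg_right z4 hMnn
    have bB : ∑ v, muB G α h v * (if v ∈ h.2 then 0 else maxWd G) ≤ (1 - α) * maxWd G := by
      have split : ∑ v ∈ Finset.univ \ h.2, (fun v => muB G α h v
            * (if v ∈ h.2 then 0 else maxWd G)) v
          + ∑ v ∈ h.2, (fun v => muB G α h v * (if v ∈ h.2 then 0 else maxWd G)) v
          = ∑ v, muB G α h v * (if v ∈ h.2 then 0 else maxWd G) :=
        Finset.sum_sdiff (Finset.subset_univ h.2)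
      have z1 : ∑ v ∈ h.2, muB G α h v * (if v ∈ h.2 then 0 else maxWd G) = 0 :=
        Finset.sum_eq_zero fun v hv => by rw [if_pos hv, mul_zero]
      have z2 : ∑ v ∈ Finset.univ \ h.2, muB G α h v * (if v ∈ h.2 then 0 else maxWd G)
          = (∑ v ∈ Finset.univ \ h.2, muB G α h v) * maxWd G := by
        rw [Finset.sum_mul]
        refine Finset.sum_congr rfl fun v hv => ?_
        rw [if_neg (Finset.mem_sdiff.1 hv).2]
      have z3 : ∑ v ∈ Finset.univ \ h.2, muB G α h v
          = 1 - ∑ v ∈ h.2, muB G α h v := by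
        have := Finset.sum_sdiff (f := muB G α h) (Finset.subset_univ h.2)
        linarith [hBsum]
      have z4 : ∑ v ∈ Finset.univ \ h.2, muB G α h v ≤ 1 - α := by
        rw [z3]; linarith
      calc ∑ v, muB G α h v * (if v ∈ h.2 then 0 else maxWd G)
          = (∑ v ∈ Finset.univ \ h.2, muB G α h v) * maxWd G := by
            rw [← split]; simp only at *; rw [z1, add_zero, z2]
        _ ≤ (1 - α) * maxWd G := mul_le_mul_of_nonneg_right z4 hMnn
    calc Ldi G h - (1 - α) * (2 * maxWd G)
        ≤ ∑ u, ∑ v, π u v * (Ldi G h - (if u ∈ h.1 then 0 else maxWd G)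
            - (if v ∈ h.2 then 0 else maxWd G)) := by
          rw [expand, c1, c2, c3]; linarith
      _ ≤ ∑ u, ∑ v, π u v * ddist G u v :=
          Finset.sum_le_sum fun u _ => Finset.sum_le_sum fun v _ => step1 u v
  -- conclude
  unfold kappaDE
  have hdivle : (Ldi G h - (1 - α) * (2 * maxWd G)) / Ldi G h
      ≤ Wd (ddist G) (muA G α h) (muB G α h) / Ldi G h :=
    (div_le_div_iff_of_pos_right hLpos).2 hW
  have hid : (Ldi G h - (1 - α) * (2 * maxWd G)) / Ldi G h
      = 1 - (1 - α) * (2 * maxWd G) / Ldi G h := by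
    rw [sub_div, div_self hLpos.ne']
  rw [hid] at hdivle
  linarith
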